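/- Exact least-squares solution at augmented critical points: Let g : ℝ^p × ℝ^d → ℝ be a parametric Morse-Bott function and let (x₀,y₀) satisfy ∂_y g(x₀,y₀) = 0. Set A := ∂²_{yy} g(x₀,y₀) and B := ∂²_{xy} g(x₀,y₀). Then B lies in the range of A: there exists a matrix U such that B = U A. -/

import Mathlib

noncomputable section

open Set Filter Topology Metric RealInnerProductSpace

abbrev Euc (n : ℕ) : Type := EuclideanSpace ℝ (Fin n)

variable {p d : ℕ}

/-- Gradient of `g` with respect to the second variable. -/
noncomputable def gradY (g : Euc p × Euc d → ℝ) (x : Euc p) (y : Euc d) : Euc d :=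
  gradient (fun y' => g (x, y')) y

/-- Hessian `∂²_{yy} g` as a continuous linear map. -/
noncomputable def hessYY (g : Euc p × Euc d → ℝ) (x : Euc p) (y : Euc d) :
    Euc d →L[ℝ] Euc d :=
  fderiv ℝ (fun y' => gradY g x y') y

/-- Mixed Hessian `∂²_{xy} g` as a continuous linear map. -/
noncomputable def hessXY (g : Euc p × Euc d → ℝ) (x : Euc p) (y : Euc d) :
    Euc p →L[ℝ] Euc d :=
  fderiv ℝ (fun x' => gradY g x' y) x

/-- Augmented critical set. -/
def augCrit (g : Euc p × Euc d → ℝ) : Set (Euc p × Euc d) :=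
  {z | gradY g z.1 z.2 = 0}

/-- `S` is a `C²` embedded submanifold of dimension `k` of `E`. -/
def IsC2Submanifold {E : Type*} [NormedAddCommGroup E] [NormedSpace ℝ E]
    (k : ℕ) (S : Set E) : Prop :=
  ∀ z ∈ S, ∃ (W : Submodule ℝ E) (U V : Set E) (ψ ψinv : E → E),
    Module.finrank ℝ W = k ∧
    IsOpen U ∧ z ∈ U ∧ IsOpen V ∧
    ContDiffOn ℝ 2 ψ U ∧ ContDiffOn ℝ 2 ψinv V ∧
    (∀ u ∈ U, ψinv (ψ u) = u) ∧ (∀ v ∈ V, ψ (ψinv v) = v) ∧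
    ψ '' U = V ∧ ψ '' (U ∩ S) = V ∩ (W : Set E)

/-- Parametric Morse–Bott function. -/
def IsParamMorseBott (g : Euc p × Euc d → ℝ) : Prop :=
  ∀ z : Euc p × Euc d, gradY g z.1 z.2 = 0 →
    ∃ V : Set (Euc p × Euc d), IsOpen V ∧ z ∈ V ∧
      IsConnected (augCrit g ∩ V) ∧
      IsC2Submanifold (p + Module.finrank ℝ (LinearMap.ker (hessYY g z.1 z.2).toLinearMap))
        (augCrit g ∩ V)

/-- `g` is `L`-smooth in `y` for some `L > 0`: the `y`-gradient is `L`-Lipschitz in `y`. -/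
def SmoothInY (g : Euc p × Euc d → ℝ) : Prop :=
  ∃ L : NNReal, 0 < L ∧ ∀ x, LipschitzWith L (fun y => gradY g x y)

/-- `g` is coercive in `y`: `g (x, y) → +∞` as `‖y‖ → +∞`. -/
def CoerciveInY (g : Euc p × Euc d → ℝ) : Prop :=
  ∀ x, Tendsto (fun y : Euc d => g (x, y)) (comap (fun y : Euc d => ‖y‖) atTop) atTop

/-- `φflow` is the gradient flow of `y ↦ g (x, y)` started at `y`. -/
def IsGradFlow (g : Euc p × Euc d → ℝ) (φflow : ℝ → Euc p → Euc d → Euc d) : Prop :=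
  (∀ x y, φflow 0 x y = y) ∧
  ∀ x y, ∀ t ∈ Ici (0:ℝ),
    HasDerivWithinAt (fun s => φflow s x y) (-(gradY g x (φflow t x y))) (Ici 0) t

/-- `φsel` is the selection obtained as the limit of the gradient flow `φflow`. -/
def IsFlowSelection (g : Euc p × Euc d → ℝ) (φflow : ℝ → Euc p → Euc d → Euc d)
    (φsel : Euc p → Euc d → Euc d) : Prop :=
  IsGradFlow g φflow ∧ ∀ x y, Tendsto (fun t => φflow t x y) atTop (𝓝 (φsel x y))

/-- Moore–Penrose pseudo-inverse, characterized by the four Penrose conditions. -/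
def IsMPInv {E : Type*} [NormedAddCommGroup E] [InnerProductSpace ℝ E] [CompleteSpace E]
    (A B : E →L[ℝ] E) : Prop :=
  A ∘L B ∘L A = A ∧ B ∘L A ∘L B = B ∧
  ContinuousLinearMap.adjoint (A ∘L B) = A ∘L B ∧
  ContinuousLinearMap.adjoint (B ∘L A) = B ∘L A



section AuxLemmas
variable {p d : ℕ}

lemma gradY_eq (g : Euc p × Euc d → ℝ) (hg : ContDiff ℝ 2 g) (x : Euc p) (y : Euc d) :
    gradY g x y = (InnerProductSpace.toDual ℝ (Euc d)).symm
      ((fderiv ℝ g (x, y)).comp (ContinuousLinearMap.inr ℝ (Euc p) (Euc d))) := by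
  have hdiff : HasFDerivAt g (fderiv ℝ g (x, y)) (x, y) :=
    ((hg.differentiable two_ne_zero) (x, y)).hasFDerivAt
  have h := hdiff.comp y (hasFDerivAt_prodMk_right x y)
  rw [gradY, gradient, (show HasFDerivAt (fun y' => g (x, y')) _ y from h).fderiv]

lemma contDiff_gradYfun (g : Euc p × Euc d → ℝ) (hg : ContDiff ℝ 2 g) :
    ContDiff ℝ 1 (fun z : Euc p × Euc d => gradY g z.1 z.2) := by
  classical
  set Φ : ((Euc p × Euc d) →L[ℝ] ℝ) →L[ℝ] Euc d :=
    ((InnerProductSpace.toDual ℝ (Euc d)).symm.toContinuousLinearEquiv.toContinuousLinearMap).comp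
      ((ContinuousLinearMap.compL ℝ (Euc d) (Euc p × Euc d) ℝ).flip
        (ContinuousLinearMap.inr ℝ (Euc p) (Euc d))) with hΦ
  have heq : (fun z : Euc p × Euc d => gradY g z.1 z.2) = fun z => Φ (fderiv ℝ g z) := by
    funext z
    rw [gradY_eq g hg z.1 z.2]
    simp [hΦ]
  rw [heq]
  exact Φ.contDiff.comp (hg.fderiv_right (by norm_num))


end AuxLemmas

set_option maxHeartbeats 1000000 in
/-- Exact least-squares solution at augmented critical points. -/
theorem exact_least_squares_solution
    {p d : ℕ} (g : Euc p × Euc d → ℝ)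
    (hg : ContDiff ℝ 2 g) (hmb : IsParamMorseBott g)
    (x₀ : Euc p) (y₀ : Euc d) (hcrit : gradY g x₀ y₀ = 0) :
    ∃ U : Euc p →L[ℝ] Euc d, hessXY g x₀ y₀ = (hessYY g x₀ y₀) ∘L U := by
  classical
  set z₀ : Euc p × Euc d := (x₀, y₀) with hz₀
  set F : Euc p × Euc d → Euc d := fun z => gradY g z.1 z.2 with hFdef
  have hF : ContDiff ℝ 1 F := contDiff_gradYfun g hg
  set T : (Euc p × Euc d) →L[ℝ] Euc d := fderiv ℝ F z₀ with hT
  have hFd : HasFDerivAt F T z₀ := (hF.differentiable one_ne_zero z₀).hasFDerivAt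
  -- Identify the partial Hessians
  have hA : hessYY g x₀ y₀ = T ∘L ContinuousLinearMap.inr ℝ (Euc p) (Euc d) := by
    have h := hFd.comp y₀ (hasFDerivAt_prodMk_right x₀ y₀)
    exact (show HasFDerivAt (fun y' => gradY g x₀ y') _ y₀ from h).fderiv
  have hB : hessXY g x₀ y₀ = T ∘L ContinuousLinearMap.inl ℝ (Euc p) (Euc d) := by
    have h := (hFd : HasFDerivAt F T (x₀, y₀)).comp x₀ (hasFDerivAt_prodMk_left (𝕜 := ℝ) x₀ y₀)
    exact (show HasFDerivAt (fun x' => gradY g x' y₀) _ x₀ from h).fderiv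
  -- Morse–Bott data
  obtain ⟨Vmb, hVmbOpen, hz₀Vmb, -, hsub⟩ := hmb z₀ hcrit
  have hz₀S : z₀ ∈ augCrit g ∩ Vmb := ⟨hcrit, hz₀Vmb⟩
  obtain ⟨W, U, V, ψ, ψinv, hrankW, hUopen, hzU, hVopen, hψ, hψinv, hleft, hright,
    himage1, himage2⟩ := hsub z₀ hz₀S
  set w₀ : Euc p × Euc d := ψ z₀ with hw₀
  have hw₀VW : w₀ ∈ V ∩ (W : Set (Euc p × Euc d)) := by
    rw [← himage2]; exact ⟨z₀, ⟨hzU, hz₀S⟩, rfl⟩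
  have hinvz : ψinv w₀ = z₀ := hleft z₀ hzU
  have hψdiff : DifferentiableAt ℝ ψ z₀ :=
    (hψ.contDiffAt (hUopen.mem_nhds hzU)).differentiableAt (by norm_num)
  have hψinvdiff : DifferentiableAt ℝ ψinv w₀ :=
    (hψinv.contDiffAt (hVopen.mem_nhds hw₀VW.1)).differentiableAt (by norm_num)
  set Dinv : (Euc p × Euc d) →L[ℝ] (Euc p × Euc d) := fderiv ℝ ψinv w₀ with hDinv
  -- Dinv is injective
  have hidcomp : (fderiv ℝ ψ z₀).comp Dinv = ContinuousLinearMap.id ℝ _ := by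
    have h1 : HasFDerivAt ψ (fderiv ℝ ψ z₀) (ψinv w₀) := by
      rw [hinvz]; exact hψdiff.hasFDerivAt
    have hcomp : HasFDerivAt (ψ ∘ ψinv) ((fderiv ℝ ψ z₀).comp Dinv) w₀ :=
      h1.comp w₀ hψinvdiff.hasFDerivAt
    have heq : ψ ∘ ψinv =ᶠ[𝓝 w₀] id :=
      eventually_of_mem (hVopen.mem_nhds hw₀VW.1) (fun v hv => hright v hv)
    have h2 : HasFDerivAt id ((fderiv ℝ ψ z₀).comp Dinv) w₀ :=
      hcomp.congr_of_eventuallyEq heq.symm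
    exact h2.unique (hasFDerivAt_id w₀)
  have hDinv_inj : Function.Injective Dinv := by
    have : Function.LeftInverse (fderiv ℝ ψ z₀) Dinv := fun v => by
      have := congrArg (fun L : (Euc p × Euc d) →L[ℝ] (Euc p × Euc d) => L v) hidcomp
      simpa using this
    exact this.injective
  -- Dinv maps W into ker T
  have hker : ∀ w ∈ W, T (Dinv w) = 0 := by
    intro w hw
    have hhd : HasFDerivAt (F ∘ ψinv) (T.comp Dinv) w₀ := by
      have hFz : HasFDerivAt F T (ψinv w₀) := by rw [hinvz]; exact hFd
      exact hFz.comp w₀ hψinvdiff.hasFDerivAt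
    have hc : HasDerivAt (fun t : ℝ => w₀ + t • w) w 0 := by
      simpa using ((hasDerivAt_id (0 : ℝ)).smul_const w).const_add w₀
    have hcomp2 : HasDerivAt ((F ∘ ψinv) ∘ fun t : ℝ => w₀ + t • w) (T (Dinv w)) 0 := by
      have hhd' : HasFDerivAt (F ∘ ψinv) (T.comp Dinv) ((fun t : ℝ => w₀ + t • w) 0) := by
        simpa using hhd
      have h := hhd'.comp_hasDerivAt 0 hc
      simpa using h
    have hzero : ((F ∘ ψinv) ∘ fun t : ℝ => w₀ + t • w) =ᶠ[𝓝 (0 : ℝ)] fun _ => 0 := by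
      have hcont : Continuous fun t : ℝ => w₀ + t • w := continuous_const.add (continuous_id.smul continuous_const)
      have hmem : ∀ᶠ t in 𝓝 (0 : ℝ), w₀ + t • w ∈ V := by
        have hpre : (fun t : ℝ => w₀ + t • w) ⁻¹' V ∈ 𝓝 (0 : ℝ) := by
          apply hcont.continuousAt.preimage_mem_nhds
          have : w₀ + (0 : ℝ) • w = w₀ := by simp
          rw [this]
          exact hVopen.mem_nhds hw₀VW.1
        exact hpre
      filter_upwards [hmem] with t ht
      have hWmem : w₀ + t • w ∈ (W : Set (Euc p × Euc d)) :=
        W.add_mem hw₀VW.2 (W.smul_mem t hw)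
      have hVW : w₀ + t • w ∈ ψ '' (U ∩ (augCrit g ∩ Vmb)) := by
        rw [himage2]; exact ⟨ht, hWmem⟩
      obtain ⟨u, huUS, hu⟩ := hVW
      have : ψinv (w₀ + t • w) = u := by rw [← hu]; exact hleft u huUS.1
      simp only [Function.comp_apply, this]
      exact huUS.2.1
    have h0 : HasDerivAt ((F ∘ ψinv) ∘ fun t : ℝ => w₀ + t • w) 0 0 :=
      (hasDerivAt_const (0 : ℝ) (0 : Euc d)).congr_of_eventuallyEq hzero
    exact hcomp2.unique h0
  -- Dimension counting
  set Tl : (Euc p × Euc d) →ₗ[ℝ] Euc d := (T : (Euc p × Euc d) →ₗ[ℝ] Euc d) with hTl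
  set Al : Euc d →ₗ[ℝ] Euc d := (hessYY g x₀ y₀ : Euc d →ₗ[ℝ] Euc d) with hAl
  set Bl : Euc p →ₗ[ℝ] Euc d := (hessXY g x₀ y₀ : Euc p →ₗ[ℝ] Euc d) with hBl
  have hfinW : Module.finrank ℝ W ≤ Module.finrank ℝ (LinearMap.ker Tl) := by
    let f : W →ₗ[ℝ] LinearMap.ker Tl :=
      LinearMap.codRestrict (LinearMap.ker Tl)
        ((Dinv : (Euc p × Euc d) →ₗ[ℝ] (Euc p × Euc d)).domRestrict W)
        (fun w => by exact hker w w.2)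
    have hfinj : Function.Injective f := by
      intro a b hab
      have : Dinv a = Dinv b := congrArg Subtype.val hab
      exact Subtype.ext (hDinv_inj this)
    exact LinearMap.finrank_le_finrank_of_injective hfinj
  have hrank : Module.finrank ℝ W = p + Module.finrank ℝ (LinearMap.ker Al) := hrankW
  have hrn1 : Module.finrank ℝ (LinearMap.range Tl) + Module.finrank ℝ (LinearMap.ker Tl)
      = p + d := by
    rw [LinearMap.finrank_range_add_finrank_ker]
    simp [Module.finrank_prod]
  have hrn2 : Module.finrank ℝ (LinearMap.range Al) + Module.finrank ℝ (LinearMap.ker Al)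
      = d := by
    rw [LinearMap.finrank_range_add_finrank_ker]
    simp
  have hle1 : Module.finrank ℝ (LinearMap.range Tl) ≤ Module.finrank ℝ (LinearMap.range Al) := by
    omega
  have hAle : LinearMap.range Al ≤ LinearMap.range Tl := by
    rw [hAl, hA]
    intro v hv
    obtain ⟨u, hu⟩ := hv
    exact ⟨(ContinuousLinearMap.inr ℝ (Euc p) (Euc d)) u, hu⟩
  have hreq : LinearMap.range Al = LinearMap.range Tl :=
    Submodule.eq_of_le_of_finrank_le hAle hle1
  have hBle : LinearMap.range Bl ≤ LinearMap.range Al := by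
    rw [hreq, hBl, hB]
    intro v hv
    obtain ⟨u, hu⟩ := hv
    exact ⟨(ContinuousLinearMap.inl ℝ (Euc p) (Euc d)) u, hu⟩
  -- Factor B through A
  obtain ⟨σ, hσ⟩ := Al.rangeRestrict.exists_rightInverse_of_surjective Al.range_rangeRestrict
  set Ulin : Euc p →ₗ[ℝ] Euc d :=
    σ ∘ₗ (Bl.codRestrict (LinearMap.range Al)
      (fun x => hBle (LinearMap.mem_range_self Bl x))) with hUlin
  refine ⟨LinearMap.toContinuousLinearMap Ulin, ContinuousLinearMap.ext fun x => ?_⟩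
  have hstep : Al (Ulin x) = Bl x := by
    have h1 : ∀ v : LinearMap.range Al, Al (σ v) = v := by
      intro v
      have := congrArg (fun L => L v) hσ
      simpa [LinearMap.rangeRestrict] using congrArg Subtype.val this
    exact h1 ⟨Bl x, hBle (LinearMap.mem_range_self Bl x)⟩
  simp only [ContinuousLinearMap.comp_apply, LinearMap.coe_toContinuousLinearMap']
  exact hstep.symm


end
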